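/- Let α ≥ 2 and let N_α be as above with smallest positive zero s_α. Then N'_α(x) ≤ 0 and N''_α(x) ≤ 0 for all x in [0, s_α]. -/

import Mathlib

/-- The confluent hypergeometric function `₁F₁(-α/2, 1/2, x²/2)` given by its power series. -/
noncomputable def Nfun (α : ℝ) (x : ℝ) : ℝ :=
  ∑' m : ℕ, ((-2 * x ^ 2) ^ m / ((2 * m).factorial : ℝ)) * ∏ j ∈ Finset.range m, (α / 2 - j)

open Finset

noncomputable def Nc (α : ℝ) (m : ℕ) : ℝ :=
  (-2 : ℝ) ^ m / ((2 * m).factorial : ℝ) * ∏ j ∈ Finset.range m, (α / 2 - j)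

lemma Nc_bound (α : ℝ) (m : ℕ) :
    |Nc α m| ≤ Real.exp (|α| / 2) * (2 * Real.exp 1) ^ m / m.factorial := by
  have h1 : |∏ j ∈ Finset.range m, (α / 2 - j)| ≤ (|α| / 2 + m) ^ m := by
    rw [Finset.abs_prod]
    calc ∏ j ∈ Finset.range m, |α / 2 - (j : ℝ)|
        ≤ ∏ j ∈ Finset.range m, (|α| / 2 + m) := by
          apply Finset.prod_le_prod (fun j _ => abs_nonneg _)
          intro j hj
          have hj' : (j : ℝ) ≤ m := by
            exact_mod_cast (Finset.mem_range.mp hj).le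
          have := abs_sub (α / 2) (j : ℝ)
          calc |α / 2 - (j : ℝ)| ≤ |α / 2| + |(j : ℝ)| := abs_sub _ _
            _ ≤ |α| / 2 + m := by
                rw [abs_div, abs_of_nonneg (by norm_num : (0:ℝ) ≤ 2)]
                rw [abs_of_nonneg (show (0:ℝ) ≤ (j:ℝ) from Nat.cast_nonneg j)]
                linarith
      _ = (|α| / 2 + m) ^ m := by rw [Finset.prod_const, Finset.card_range]
  have h2 : (|α| / 2 + m) ^ m ≤ m.factorial * Real.exp (|α| / 2 + m) := by
    have hx : (0:ℝ) ≤ |α| / 2 + m := by positivity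
    have := Real.pow_div_factorial_le_exp _ hx m
    have hf : (0:ℝ) < m.factorial := by exact_mod_cast m.factorial_pos
    calc (|α| / 2 + m) ^ m = ((|α| / 2 + m) ^ m / m.factorial) * m.factorial := by
          field_simp
      _ ≤ Real.exp (|α| / 2 + m) * m.factorial := by
          apply mul_le_mul_of_nonneg_right this hf.le
      _ = m.factorial * Real.exp (|α| / 2 + m) := mul_comm _ _
  have h3 : ((m.factorial : ℝ)) * m.factorial ≤ (2 * m).factorial := by
    have : m.factorial * m.factorial ∣ (2 * m).factorial := by
      have := Nat.factorial_mul_factorial_dvd_factorial_add m m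
      simpa [two_mul] using this
    exact_mod_cast Nat.le_of_dvd (2 * m).factorial_pos this
  have hfm : (0:ℝ) < m.factorial := by exact_mod_cast m.factorial_pos
  have hf2m : (0:ℝ) < (2 * m).factorial := by exact_mod_cast (2 * m).factorial_pos
  have habs : |Nc α m| = 2 ^ m / ((2 * m).factorial : ℝ) * |∏ j ∈ Finset.range m, (α / 2 - j)| := by
    rw [Nc, abs_mul, abs_div, abs_pow, abs_neg, abs_of_nonneg (by norm_num : (0:ℝ) ≤ 2),
      abs_of_pos hf2m]
  rw [habs]
  have hexp : Real.exp (|α| / 2 + m) = Real.exp (|α| / 2) * Real.exp 1 ^ m := by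
    rw [Real.exp_add, ← Real.exp_nat_mul]
    norm_num
  calc 2 ^ m / ((2 * m).factorial : ℝ) * |∏ j ∈ Finset.range m, (α / 2 - j)|
      ≤ 2 ^ m / ((2 * m).factorial : ℝ) * (m.factorial * Real.exp (|α| / 2 + m)) := by
        apply mul_le_mul_of_nonneg_left (h1.trans h2) (by positivity)
    _ ≤ Real.exp (|α| / 2) * (2 * Real.exp 1) ^ m / m.factorial := by
        rw [hexp, mul_pow]
        rw [div_mul_eq_mul_div, div_le_div_iff₀ hf2m hfm]
        have e1 : Real.exp 1 ^ m > 0 := by positivity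
        have e2 : Real.exp (|α|/2) > 0 := Real.exp_pos _
        have key := h3
        calc 2 ^ m * ((m.factorial : ℝ) * (Real.exp (|α| / 2) * Real.exp 1 ^ m)) * m.factorial
            = (2 ^ m * Real.exp (|α|/2) * Real.exp 1 ^ m) * ((m.factorial : ℝ) * m.factorial) := by ring
          _ ≤ (2 ^ m * Real.exp (|α|/2) * Real.exp 1 ^ m) * (2 * m).factorial := by
              apply mul_le_mul_of_nonneg_left key (by positivity)
          _ = Real.exp (|α| / 2) * (2 ^ m * Real.exp 1 ^ m) * (2 * m).factorial := by ring

noncomputable def ub (α R : ℝ) (m : ℕ) : ℝ := (2 * m + 1 : ℝ) ^ 2 * |Nc α m| * R ^ (2 * m)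

lemma two_mul_add_one_le (m : ℕ) : (2 * m + 1 : ℝ) ≤ 3 * 2 ^ m := by
  have h : (m : ℝ) ≤ 2 ^ m := by
    exact_mod_cast (Nat.lt_two_pow_self (n := m)).le
  have h1 : (1 : ℝ) ≤ 2 ^ m := one_le_pow₀ (by norm_num)
  linarith

lemma summable_ub (α R : ℝ) : Summable (ub α R) := by
  have hs : Summable (fun m : ℕ => 9 * Real.exp (|α| / 2) * ((8 * Real.exp 1 * R ^ 2) ^ m / m.factorial)) :=
    (Real.summable_pow_div_factorial _).mul_left _
  refine Summable.of_nonneg_of_le (fun m => mul_nonneg (mul_nonneg (by positivity) (abs_nonneg _)) ((even_two_mul m).pow_nonneg R)) (fun m => ?_) hs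
  · 
    have h1 : (2 * m + 1 : ℝ) ^ 2 ≤ 9 * 4 ^ m := by
      have := two_mul_add_one_le m
      have h0 : (0:ℝ) ≤ 2 * m + 1 := by positivity
      calc (2 * m + 1 : ℝ) ^ 2 ≤ (3 * 2 ^ m) ^ 2 := by
            apply pow_le_pow_left₀ h0 this
        _ = 9 * 4 ^ m := by rw [mul_pow, ← pow_mul, mul_comm m 2, pow_mul]; norm_num
    have h2 := Nc_bound α m
    have hR : R ^ (2 * m) = (R ^ 2) ^ m := by rw [pow_mul]
    have hR2 : (0:ℝ) ≤ (R ^ 2) ^ m := by positivity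
    have hNc : (0:ℝ) ≤ |Nc α m| := abs_nonneg _
    have hfm : (0:ℝ) < m.factorial := by exact_mod_cast m.factorial_pos
    rw [ub, hR]
    calc (2 * m + 1 : ℝ) ^ 2 * |Nc α m| * (R ^ 2) ^ m
        ≤ (9 * 4 ^ m) * (Real.exp (|α| / 2) * (2 * Real.exp 1) ^ m / m.factorial) * (R ^ 2) ^ m := by
          apply mul_le_mul_of_nonneg_right _ hR2
          apply mul_le_mul h1 h2 hNc (by positivity)
      _ = 9 * Real.exp (|α| / 2) * ((8 * Real.exp 1 * R ^ 2) ^ m / m.factorial) := by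
          rw [mul_pow, mul_pow, mul_pow]
          field_simp
          rw [show (8:ℝ) = 2 * 4 by norm_num, mul_pow]
          ring

/-- level-0 term -/
noncomputable def t0 (α : ℝ) (m : ℕ) (x : ℝ) : ℝ := Nc α m * x ^ (2 * m)
/-- level-1 term -/
noncomputable def t1 (α : ℝ) (m : ℕ) (x : ℝ) : ℝ := Nc α m * (((2 * m : ℕ) : ℝ) * x ^ (2 * m - 1))
/-- level-2 term -/
noncomputable def t2 (α : ℝ) (m : ℕ) (x : ℝ) : ℝ :=
  Nc α m * (((2 * m : ℕ) : ℝ) * (((2 * m - 1 : ℕ) : ℝ) * x ^ (2 * m - 2)))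

lemma hasDerivAt_t0 (α : ℝ) (m : ℕ) (x : ℝ) : HasDerivAt (t0 α m) (t1 α m x) x := by
  exact (hasDerivAt_pow (2 * m) x).const_mul (Nc α m)

lemma hasDerivAt_t1 (α : ℝ) (m : ℕ) (x : ℝ) : HasDerivAt (t1 α m) (t2 α m x) x := by
  have h : (2 * m - 1 - 1) = 2 * m - 2 := by omega
  have := ((hasDerivAt_pow (2 * m - 1) x).const_mul (((2 * m : ℕ) : ℝ))).const_mul (Nc α m)
  rw [h] at this
  exact this

lemma bound_t0 (α R : ℝ) (m : ℕ) (x : ℝ) (hx : |x| ≤ R) (hR : 1 ≤ R) :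
    |t0 α m x| ≤ ub α R m := by
  have hR0 : (0:ℝ) ≤ R := le_trans zero_le_one hR
  have hp : |x| ^ (2 * m) ≤ R ^ (2 * m) := pow_le_pow_left₀ (abs_nonneg x) hx _
  have h1 : (1:ℝ) ≤ (2 * m + 1 : ℝ) ^ 2 := by nlinarith [Nat.cast_nonneg (α := ℝ) m]
  calc |t0 α m x| = |Nc α m| * |x| ^ (2 * m) := by rw [t0, abs_mul, abs_pow]
    _ ≤ |Nc α m| * R ^ (2 * m) := by
        apply mul_le_mul_of_nonneg_left hp (abs_nonneg _)
    _ ≤ ub α R m := by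
        rw [ub]
        nlinarith [abs_nonneg (Nc α m), pow_nonneg hR0 (2 * m), h1,
          mul_nonneg (abs_nonneg (Nc α m)) (pow_nonneg hR0 (2 * m))]

lemma bound_t1 (α R : ℝ) (m : ℕ) (x : ℝ) (hx : |x| ≤ R) (hR : 1 ≤ R) :
    |t1 α m x| ≤ ub α R m := by
  have hR0 : (0:ℝ) ≤ R := le_trans zero_le_one hR
  have hp : |x| ^ (2 * m - 1) ≤ R ^ (2 * m - 1) := pow_le_pow_left₀ (abs_nonneg x) hx _
  have hp2 : R ^ (2 * m - 1) ≤ R ^ (2 * m) := pow_le_pow_right₀ hR (by omega)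
  have hc : ((2 * m : ℕ) : ℝ) ≤ (2 * m + 1 : ℝ) ^ 2 := by
    push_cast; nlinarith [Nat.cast_nonneg (α := ℝ) m]
  have hcn : (0:ℝ) ≤ ((2 * m : ℕ) : ℝ) := Nat.cast_nonneg _
  calc |t1 α m x| = |Nc α m| * (((2 * m : ℕ) : ℝ) * |x| ^ (2 * m - 1)) := by
        rw [t1, abs_mul, abs_mul, abs_pow, Nat.abs_cast]
    _ ≤ |Nc α m| * ((2 * m + 1 : ℝ) ^ 2 * R ^ (2 * m)) := by
        apply mul_le_mul_of_nonneg_left _ (abs_nonneg _)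
        apply mul_le_mul hc (hp.trans hp2) (pow_nonneg (abs_nonneg x) _) (by positivity)
    _ = ub α R m := by rw [ub]; ring

lemma bound_t2 (α R : ℝ) (m : ℕ) (x : ℝ) (hx : |x| ≤ R) (hR : 1 ≤ R) :
    |t2 α m x| ≤ ub α R m := by
  have hR0 : (0:ℝ) ≤ R := le_trans zero_le_one hR
  have hp : |x| ^ (2 * m - 2) ≤ R ^ (2 * m - 2) := pow_le_pow_left₀ (abs_nonneg x) hx _
  have hp2 : R ^ (2 * m - 2) ≤ R ^ (2 * m) := pow_le_pow_right₀ hR (by omega)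
  have hc : ((2 * m : ℕ) : ℝ) * ((2 * m - 1 : ℕ) : ℝ) ≤ (2 * m + 1 : ℝ) ^ 2 := by
    have h1 : ((2 * m - 1 : ℕ) : ℝ) ≤ 2 * m + 1 := by
      have : (2 * m - 1 : ℕ) ≤ 2 * m + 1 := by omega
      exact_mod_cast le_trans (Nat.cast_le.mpr this) (by push_cast; linarith)
    have h2 : ((2 * m : ℕ) : ℝ) ≤ 2 * m + 1 := by push_cast; linarith
    have h3 : (0:ℝ) ≤ ((2 * m - 1 : ℕ) : ℝ) := Nat.cast_nonneg _
    have h4 : (0:ℝ) ≤ (2 * m + 1 : ℝ) := by positivity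
    nlinarith
  calc |t2 α m x| = |Nc α m| * (((2 * m : ℕ) : ℝ) * (((2 * m - 1 : ℕ) : ℝ) * |x| ^ (2 * m - 2))) := by
        rw [t2, abs_mul, abs_mul, abs_mul, abs_pow, Nat.abs_cast, Nat.abs_cast]
    _ ≤ |Nc α m| * ((2 * m + 1 : ℝ) ^ 2 * R ^ (2 * m)) := by
        apply mul_le_mul_of_nonneg_left _ (abs_nonneg _)
        rw [← mul_assoc]
        apply mul_le_mul hc (hp.trans hp2) (pow_nonneg (abs_nonneg x) _) (by positivity)
    _ = ub α R m := by rw [ub]; ring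

lemma summable_t0 (α : ℝ) (x : ℝ) : Summable (fun m => t0 α m x) := by
  apply Summable.of_norm
  apply Summable.of_nonneg_of_le (fun m => norm_nonneg _)
    (fun m => by simpa [Real.norm_eq_abs] using bound_t0 α (|x| + 1) m x (by linarith) (by linarith [abs_nonneg x]))
  exact summable_ub α (|x| + 1)

lemma summable_t1 (α : ℝ) (x : ℝ) : Summable (fun m => t1 α m x) := by
  apply Summable.of_norm
  apply Summable.of_nonneg_of_le (fun m => norm_nonneg _)
    (fun m => by simpa [Real.norm_eq_abs] using bound_t1 α (|x| + 1) m x (by linarith) (by linarith [abs_nonneg x]))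
  exact summable_ub α (|x| + 1)

lemma summable_t2 (α : ℝ) (x : ℝ) : Summable (fun m => t2 α m x) := by
  apply Summable.of_norm
  apply Summable.of_nonneg_of_le (fun m => norm_nonneg _)
    (fun m => by simpa [Real.norm_eq_abs] using bound_t2 α (|x| + 1) m x (by linarith) (by linarith [abs_nonneg x]))
  exact summable_ub α (|x| + 1)

noncomputable def N0 (α : ℝ) (x : ℝ) : ℝ := ∑' m, t0 α m x
noncomputable def N1 (α : ℝ) (x : ℝ) : ℝ := ∑' m, t1 α m x
noncomputable def N2 (α : ℝ) (x : ℝ) : ℝ := ∑' m, t2 α m x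

lemma hasDerivAt_N0 (α : ℝ) (x : ℝ) : HasDerivAt (N0 α) (N1 α x) x := by
  have hR : (1:ℝ) ≤ |x| + 1 := by linarith [abs_nonneg x]
  have hx : x ∈ Metric.ball (0:ℝ) (|x| + 1) := by
    rw [Metric.mem_ball, Real.dist_eq, sub_zero]; linarith
  exact hasDerivAt_tsum_of_isPreconnected (summable_ub α (|x| + 1)) Metric.isOpen_ball
    (convex_ball (0:ℝ) (|x|+1)).isPreconnected
    (fun m y _ => hasDerivAt_t0 α m y)
    (fun m y hy => by
      simp only [Real.norm_eq_abs]
      exact bound_t1 α (|x| + 1) m y (le_of_lt (by simpa [Real.dist_eq] using Metric.mem_ball.mp hy)) hR)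
    hx (summable_t0 α x) hx

lemma hasDerivAt_N1 (α : ℝ) (x : ℝ) : HasDerivAt (N1 α) (N2 α x) x := by
  have hR : (1:ℝ) ≤ |x| + 1 := by linarith [abs_nonneg x]
  have hx : x ∈ Metric.ball (0:ℝ) (|x| + 1) := by
    rw [Metric.mem_ball, Real.dist_eq, sub_zero]; linarith
  exact hasDerivAt_tsum_of_isPreconnected (summable_ub α (|x| + 1)) Metric.isOpen_ball
    (convex_ball (0:ℝ) (|x|+1)).isPreconnected
    (fun m y _ => hasDerivAt_t1 α m y)
    (fun m y hy => by
      simp only [Real.norm_eq_abs]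
      exact bound_t2 α (|x| + 1) m y (le_of_lt (by simpa [Real.dist_eq] using Metric.mem_ball.mp hy)) hR)
    hx (summable_t1 α x) hx


lemma Nc_zero (α : ℝ) : Nc α 0 = 1 := by simp [Nc]

lemma Nc_succ (α : ℝ) (m : ℕ) :
    Nc α (m+1) * ((2*m+2) * (2*m+1) : ℝ) = (2*(m:ℝ) - α) * Nc α m := by
  have hfac : (2*(m+1)) = (2*m+1) + 1 := by ring
  have h1 : (((2*(m+1)).factorial : ℕ) : ℝ)
      = ((2*(m:ℝ)+2)) * ((2*(m:ℝ)+1)) * ((2*m).factorial : ℝ) := by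
    rw [hfac, Nat.factorial_succ, Nat.factorial_succ]
    push_cast; ring
  have h2 : (0:ℝ) < ((2*m).factorial : ℝ) := by exact_mod_cast Nat.factorial_pos _
  rw [Nc, Nc, Finset.prod_range_succ, h1]
  have hm : (0:ℝ) ≤ (m:ℝ) := Nat.cast_nonneg m
  have hne1 : (2*(m:ℝ)+2) ≠ 0 := by positivity
  have hne2 : (2*(m:ℝ)+1) ≠ 0 := by positivity
  field_simp
  ring

lemma term_ode (α : ℝ) (m : ℕ) (x : ℝ) :
    t2 α (m+1) x = x * t1 α m x - α * t0 α m x := by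
  have e1 : 2*(m+1) - 1 = 2*m+1 := by omega
  have e2 : 2*(m+1) - 2 = 2*m := by omega
  have hx : x * (((2*m : ℕ):ℝ) * x^(2*m-1)) = ((2*m : ℕ):ℝ) * x^(2*m) := by
    cases m with
    | zero => simp
    | succ k =>
      have h3 : 2*(k+1) - 1 + 1 = 2*(k+1) := by omega
      calc x * (((2*(k+1) : ℕ):ℝ) * x^(2*(k+1)-1))
          = ((2*(k+1) : ℕ):ℝ) * (x^(2*(k+1)-1) * x) := by ring
        _ = ((2*(k+1) : ℕ):ℝ) * x^(2*(k+1)) := by rw [← pow_succ, h3]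
  rw [t2, t1, t0, e1, e2, mul_comm x (Nc α m * _), mul_assoc, mul_comm _ x, hx]
  have key := Nc_succ α m
  have c1 : ((2*(m+1) : ℕ):ℝ) = 2*(m:ℝ)+2 := by push_cast; ring
  have c2 : ((2*m+1 : ℕ):ℝ) = 2*(m:ℝ)+1 := by push_cast; ring
  have c3 : ((2*m : ℕ):ℝ) = 2*(m:ℝ) := by push_cast; ring
  rw [c1, c2, c3]
  linear_combination (x^(2*m)) * key

lemma N0_ode (α : ℝ) (x : ℝ) : N2 α x = x * N1 α x - α * N0 α x := by
  have h1 : x * N1 α x = ∑' m, x * t1 α m x := by rw [N1, tsum_mul_left]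
  have h2 : α * N0 α x = ∑' m, α * t0 α m x := by rw [N0, tsum_mul_left]
  have hsub : x * N1 α x - α * N0 α x = ∑' m, (x * t1 α m x - α * t0 α m x) := by
    rw [h1, h2, ← Summable.tsum_sub ((summable_t1 α x).mul_left x) ((summable_t0 α x).mul_left α)]
  rw [hsub, N2, Summable.tsum_eq_zero_add (summable_t2 α x)]
  have ht20 : t2 α 0 x = 0 := by simp [t2]
  rw [ht20, zero_add]
  exact tsum_congr fun m => term_ode α m x

lemma N0_zero (α : ℝ) : N0 α 0 = 1 := by
  rw [N0, tsum_eq_single 0 (fun m hm => by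
    simp [t0, zero_pow (by omega : 2*m ≠ 0)])]
  simp [t0, Nc_zero]

lemma N1_zero (α : ℝ) : N1 α 0 = 0 := by
  rw [N1]
  convert tsum_zero with m
  cases m with
  | zero => simp [t1]
  | succ k => simp [t1, zero_pow (by omega : 2*(k+1) - 1 ≠ 0)]

lemma Nfun_eq (α : ℝ) : Nfun α = N0 α := by
  funext x
  rw [Nfun, N0]
  refine tsum_congr fun m => ?_
  rw [t0, Nc]
  rw [show (-2 * x^2 : ℝ)^m = (-2:ℝ)^m * x^(2*m) by rw [mul_pow, ← pow_mul]]
  ring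

lemma deriv_Nfun (α : ℝ) : deriv (Nfun α) = N1 α := by
  funext y
  rw [Nfun_eq]
  exact (hasDerivAt_N0 α y).deriv

lemma deriv2_Nfun (α : ℝ) : deriv (deriv (Nfun α)) = N2 α := by
  funext y
  rw [deriv_Nfun]
  exact (hasDerivAt_N1 α y).deriv

theorem stmt18 (α : ℝ) (hα : 2 ≤ α) (s : ℝ)
    (hs : IsLeast {x : ℝ | 0 < x ∧ Nfun α x = 0} s)
    (x : ℝ) (hx : x ∈ Set.Icc 0 s) :
    deriv (Nfun α) x ≤ 0 ∧ deriv (deriv (Nfun α)) x ≤ 0 := by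
  obtain ⟨⟨hs0, hfs⟩, hsle⟩ := hs
  rw [Nfun_eq] at hfs hsle
  have hα0 : (0:ℝ) < α := by linarith
  have fcont : Continuous (N0 α) :=
    continuous_iff_continuousAt.mpr fun y => (hasDerivAt_N0 α y).continuousAt
  have gcont : Continuous (N1 α) :=
    continuous_iff_continuousAt.mpr fun y => (hasDerivAt_N1 α y).continuousAt
  -- positivity of N0 on [0, s)
  have hpos : ∀ y, 0 ≤ y → y < s → 0 < N0 α y := by
    intro y hy0 hys
    by_contra hcon
    push_neg at hcon
    have hyne : N0 α y ≠ 0 := by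
      intro h0
      have hy0' : 0 < y := by
        rcases eq_or_lt_of_le hy0 with h | h
        · exfalso; rw [← h] at h0; rw [N0_zero] at h0; norm_num at h0
        · exact h
      exact absurd (hsle ⟨hy0', h0⟩) (not_le.mpr hys)
    have hneg : N0 α y < 0 := lt_of_le_of_ne hcon hyne
    have h01 : N0 α 0 = 1 := N0_zero α
    have := intermediate_value_Icc' hy0 (fcont.continuousOn (s := Set.Icc 0 y))
    have h0mem : (0:ℝ) ∈ Set.Icc (N0 α y) (N0 α 0) := ⟨hneg.le, by rw [h01]; norm_num⟩
    obtain ⟨z, hz, hz0⟩ := this h0mem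
    have hzpos : 0 < z := by
      rcases eq_or_lt_of_le hz.1 with h | h
      · exfalso; rw [← h, h01] at hz0; norm_num at hz0
      · exact h
    have := hsle ⟨hzpos, hz0⟩
    have : s ≤ y := le_trans this hz.2
    exact absurd this (not_le.mpr hys)
  have hnonneg : ∀ y, 0 ≤ y → y ≤ s → 0 ≤ N0 α y := by
    intro y hy0 hys
    rcases eq_or_lt_of_le hys with h | h
    · rw [h, hfs]
    · exact (hpos y hy0 h).le
  -- N1 ≤ 0 on [0,s]
  have hg : ∀ t, 0 ≤ t → t ≤ s → N1 α t ≤ 0 := by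
    intro t ht0 hts
    by_contra hcon
    push_neg at hcon
    have htpos : 0 < t := by
      rcases eq_or_lt_of_le ht0 with h | h
      · exfalso; rw [← h, N1_zero] at hcon; norm_num at hcon
      · exact h
    set S' : Set ℝ := Set.Icc 0 t ∩ {y | N1 α y ≤ 0} with hS'
    have hclosed : IsClosed S' := isClosed_Icc.inter (isClosed_le gcont continuous_const)
    have hne : S'.Nonempty := ⟨0, ⟨le_refl 0, ht0⟩, by simp [N1_zero]⟩
    have hbdd : BddAbove S' := ⟨t, fun y hy => hy.1.2⟩
    set c := sSup S' with hc
    have hcS : c ∈ S' := hclosed.csSup_mem hne hbdd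
    have hc0 : 0 ≤ c := hcS.1.1
    have hgc : N1 α c ≤ 0 := hcS.2
    have hct : c < t := by
      rcases eq_or_lt_of_le hcS.1.2 with h | h
      · exfalso; rw [h] at hgc; linarith
      · exact h
    have hcs : c < s := lt_of_lt_of_le hct hts
    have hgy : ∀ y, c < y → y ≤ t → 0 < N1 α y := by
      intro y hcy hyt
      by_contra hgy
      push_neg at hgy
      have : y ∈ S' := ⟨⟨le_trans hc0 hcy.le, hyt⟩, hgy⟩
      exact absurd (le_csSup hbdd this) (not_le.mpr hcy)
    have hfc : 0 < N0 α c := hpos c hc0 hcs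
    have hd : N2 α c < 0 := by
      rw [N0_ode]
      have h1 : c * N1 α c ≤ 0 := mul_nonpos_of_nonneg_of_nonpos hc0 hgc
      nlinarith
    have hder : HasDerivAt (N1 α) (N2 α c) c := hasDerivAt_N1 α c
    have hslope : Filter.Tendsto (slope (N1 α) c) (nhdsWithin c (Set.Ioi c)) (nhds (N2 α c)) := by
      have h1 := hasDerivAt_iff_tendsto_slope.mp hder
      exact h1.mono_left (nhdsWithin_mono c fun y hy => ne_of_gt hy)
    have hev : ∀ᶠ y in nhdsWithin c (Set.Ioi c), 0 ≤ slope (N1 α) c y := by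
      filter_upwards [Ioo_mem_nhdsGT_of_mem ⟨le_refl c, hct⟩] with y hy
      rw [slope_def_field]
      apply div_nonneg _ (by linarith [hy.1] : (0:ℝ) ≤ y - c)
      have := hgy y hy.1 hy.2.le
      linarith
    have : 0 ≤ N2 α c := ge_of_tendsto hslope hev
    linarith
  -- conclude
  obtain ⟨hx0, hxs⟩ := hx
  constructor
  · rw [deriv_Nfun]
    exact hg x hx0 hxs
  · rw [deriv2_Nfun, N0_ode]
    have h1 : x * N1 α x ≤ 0 := mul_nonpos_of_nonneg_of_nonpos hx0 (hg x hx0 hxs)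
    have h2 : 0 ≤ α * N0 α x := mul_nonneg hα0.le (hnonneg x hx0 hxs)
    linarith
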